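/- Let V be a finite-dimensional vector space over ℚ, let r ≥ 1 be an integer, let Q and Q' be quadratic forms on V with Q ≠ 0, and let c be a nonzero rational number such that Q(v)^r = c·Q'(v)^r for all v ∈ V. Then there exists a rational number λ such that Q' = λ·Q (and necessarily c·λ^r = 1). -/

import Mathlib

open Polynomial in
/-- If two rational polynomials satisfy `F(t)^r = c * G(t)^r` for all `t`, with `F(0) ≠ 0`,
then `G = μ • F` for a constant `μ`. -/
lemma poly_pow_aux (r : ℕ) (hr : 1 ≤ r) (c : ℚ) (hc : c ≠ 0) (F G : ℚ[X])
    (hF0 : F.eval 0 ≠ 0) (h : ∀ t : ℚ, F.eval t ^ r = c * G.eval t ^ r) :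
    ∃ μ : ℚ, G = C μ * F := by
  have hFne : F ≠ 0 := fun hF => hF0 (by simp [hF])
  -- the set of possible ratios is finite
  have hSpoly : (X ^ r - C c⁻¹ : ℚ[X]) ≠ 0 := by
    intro hz
    have := congrArg (fun p : ℚ[X] => p.coeff r) hz
    simp [coeff_X_pow, Polynomial.coeff_C, Nat.one_le_iff_ne_zero.mp hr] at this
  have hSfin : Set.Finite {x : ℚ | x ^ r = c⁻¹} := by
    have := Polynomial.finite_setOf_isRoot hSpoly
    convert this using 1
    ext x
    simp [Polynomial.IsRoot, sub_eq_zero]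
  -- the set where F doesn't vanish is infinite
  have hTinf : Set.Infinite {t : ℚ | F.eval t ≠ 0} := by
    have : {t : ℚ | F.eval t = 0}.Finite := Polynomial.finite_setOf_isRoot hFne
    simpa [Set.compl_setOf] using this.infinite_compl
  -- pigeonhole: some ratio μ occurs infinitely often
  haveI : Infinite {t : ℚ // F.eval t ≠ 0} := hTinf.to_subtype
  haveI : Finite {x : ℚ // x ^ r = c⁻¹} := hSfin.to_subtype
  have hmap : ∀ t : {t : ℚ // F.eval t ≠ 0},
      (G.eval t.1 / F.eval t.1) ^ r = c⁻¹ := by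
    intro ⟨t, ht⟩
    have := h t
    field_simp
    have hG : G.eval t ^ r ≠ 0 := by
      intro h0
      rw [h0, mul_zero] at this
      exact ht (pow_eq_zero_iff (Nat.one_le_iff_ne_zero.mp hr) |>.mp this)
    rw [div_pow, this]
    field_simp
  obtain ⟨⟨μ, hμ⟩, hfib⟩ := Finite.exists_infinite_fiber
    (fun t : {t : ℚ // F.eval t ≠ 0} => (⟨G.eval t.1 / F.eval t.1, hmap t⟩ : {x : ℚ // x ^ r = c⁻¹}))
  refine ⟨μ, ?_⟩
  have hzero : G - C μ * F = 0 := by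
    apply Polynomial.eq_zero_of_infinite_isRoot
    have hsub : Set.Infinite (Subtype.val '' ((fun t : {t : ℚ // F.eval t ≠ 0} =>
        (⟨G.eval t.1 / F.eval t.1, hmap t⟩ : {x : ℚ // x ^ r = c⁻¹})) ⁻¹' {⟨μ, hμ⟩})) := by
      rw [Set.infinite_coe_iff] at hfib
      exact (Set.infinite_image_iff Subtype.val_injective.injOn).mpr hfib
    refine hsub.mono ?_
    rintro t ⟨⟨t', ht'⟩, hmem, rfl⟩
    simp only [Set.mem_preimage, Set.mem_singleton_iff, Subtype.mk.injEq] at hmem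
    field_simp at hmem
    simp [Polynomial.IsRoot, hmem]
    ring
  linear_combination hzero
theorem quadraticForm_proportional_of_pow_eq
    (V : Type*) [AddCommGroup V] [Module ℚ V] [FiniteDimensional ℚ V]
    (r : ℕ) (hr : 1 ≤ r) (Q Q' : QuadraticForm ℚ V) (hQ : Q ≠ 0)
    (c : ℚ) (hc : c ≠ 0) (h : ∀ v : V, Q v ^ r = c * Q' v ^ r) :
    ∃ l : ℚ, Q' = l • Q ∧ c * l ^ r = 1 := by
  obtain ⟨v₀, hv₀⟩ : ∃ v, Q v ≠ 0 := by
    by_contra h'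
    push_neg at h'
    exact hQ (QuadraticMap.ext fun v => by simp [h' v])
  have hb : Q' v₀ ≠ 0 := by
    intro hb
    have := h v₀
    rw [hb, zero_pow (Nat.one_le_iff_ne_zero.mp hr)] at this
    exact hv₀ (pow_eq_zero_iff (Nat.one_le_iff_ne_zero.mp hr) |>.mp (by linarith))
  set l : ℚ := Q' v₀ / Q v₀ with hl
  have hcl : c * l ^ r = 1 := by
    rw [hl, div_pow]
    rw [h v₀]
    field_simp
  refine ⟨l, ?_, hcl⟩
  ext w
  -- restrict to the plane spanned by v₀ and w
  set F : Polynomial ℚ := Polynomial.C (Q v₀) + Polynomial.C (QuadraticMap.polar Q v₀ w) * Polynomial.X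
    + Polynomial.C (Q w) * Polynomial.X ^ 2 with hF
  set G : Polynomial ℚ := Polynomial.C (Q' v₀) + Polynomial.C (QuadraticMap.polar Q' v₀ w) * Polynomial.X
    + Polynomial.C (Q' w) * Polynomial.X ^ 2 with hG
  have hFe : ∀ t : ℚ, F.eval t = Q (v₀ + t • w) := by
    intro t
    rw [QuadraticMap.map_add (⇑Q) v₀ (t • w), QuadraticMap.map_smul, QuadraticMap.polar_smul_right]
    simp [hF]
    ring
  have hGe : ∀ t : ℚ, G.eval t = Q' (v₀ + t • w) := by
    intro t
    rw [QuadraticMap.map_add (⇑Q') v₀ (t • w), QuadraticMap.map_smul, QuadraticMap.polar_smul_right]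
    simp [hG]
    ring
  have hF0 : F.eval 0 ≠ 0 := by simpa [hF] using hv₀
  obtain ⟨μ, hμ⟩ := poly_pow_aux r hr c hc F G hF0
    (fun t => by rw [hFe, hGe]; exact h _)
  have hμl : μ = l := by
    have h0 := congrArg (Polynomial.eval 0) hμ
    simp [hF, hG] at h0
    rw [hl, h0]
    field_simp
  have hcoeff := congrArg (fun p => Polynomial.coeff p 2) hμ
  simp [hF, hG, Polynomial.coeff_C, Polynomial.coeff_X] at hcoeff
  rw [hμl] at hcoeff
  simp [hcoeff]
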